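/- There exists an LRL expression t and distinct atoms a, b such that (a b)·t ~ t and FA(t) = {a, b}. Concretely, t = letrec c.a; d.b in True satisfies (a b)·t ~ t. -/

import Mathlib

/-- Letrec language LRL: atoms, lambda, function application, letrec. -/
inductive LRL : Type
  | atom (a : ℕ) : LRL
  | lam (a : ℕ) (e : LRL) : LRL
  | app (f : ℕ) (es : List LRL) : LRL
  | letr (env : List (ℕ × LRL)) (e : LRL) : LRL

mutual
/-- Action of an atom-permutation on expressions (renames all atoms). -/
def act (π : Equiv.Perm ℕ) : LRL → LRL
  | .atom a => .atom (π a)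
  | .lam a e => .lam (π a) (act π e)
  | .app f es => .app f (actList π es)
  | .letr env e => .letr (actEnv π env) (act π e)

def actList (π : Equiv.Perm ℕ) : List LRL → List LRL
  | [] => []
  | e :: es => act π e :: actList π es

def actEnv (π : Equiv.Perm ℕ) : List (ℕ × LRL) → List (ℕ × LRL)
  | [] => []
  | (a, e) :: env => (π a, act π e) :: actEnv π env
end

mutual
/-- Free atoms of an expression. -/
def FA : LRL → Finset ℕ
  | .atom a => {a}
  | .lam a e => FA e \ {a}
  | .app _ es => FAList es
  | .letr env e => (FAEnv env ∪ FA e) \ (env.map Prod.fst).toFinset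

def FAList : List LRL → Finset ℕ
  | [] => ∅
  | e :: es => FA e ∪ FAList es

def FAEnv : List (ℕ × LRL) → Finset ℕ
  | [] => ∅
  | (_, e) :: env => FA e ∪ FAEnv env
end

/-- Iterated lambda over the binders of an environment, around the tuple of
the bound expressions together with the body (tuples are encoded as a
function application with a reserved function symbol `0`). -/
def tupled (env : List (ℕ × LRL)) (e : LRL) : LRL :=
  (env.map Prod.fst).foldr LRL.lam (LRL.app 0 (env.map Prod.snd ++ [e]))

/-- α-equivalence on LRL, where letrec environments are compared up to a
permutation of the bindings. -/
inductive Aeq : LRL → LRL → Prop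
  | atom (a : ℕ) : Aeq (.atom a) (.atom a)
  | app (f : ℕ) (es es' : List LRL) (hlen : es.length = es'.length)
      (h : ∀ (i : ℕ) (h1 : i < es.length) (h2 : i < es'.length),
        Aeq (es.get ⟨i, h1⟩) (es'.get ⟨i, h2⟩)) :
      Aeq (.app f es) (.app f es')
  | lamSame (a : ℕ) (e e' : LRL) (h : Aeq e e') : Aeq (.lam a e) (.lam a e')
  | lamDiff (a b : ℕ) (e e' : LRL) (hab : a ≠ b) (hfresh : a ∉ FA e')
      (h : Aeq e (act (Equiv.swap a b) e')) : Aeq (.lam a e) (.lam b e')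
  | letr (env env' env'' : List (ℕ × LRL)) (e e' : LRL)
      (hperm : env'.Perm env'')
      (h : Aeq (tupled env e) (tupled env'' e')) :
      Aeq (.letr env e) (.letr env' e')

/-- There is an expression `t` with `(a b)·t ~ t` and `FA t = {a, b}`:
concretely `t = letrec c.a; d.b in True` (with `True` a nullary function
symbol, here encoded as function symbol `1`). -/
theorem nontrivial_fixpoint (a b c d : ℕ)
    (hab : a ≠ b) (hac : a ≠ c) (had : a ≠ d) (hbc : b ≠ c) (hbd : b ≠ d)
    (hcd : c ≠ d) :
    ∃ t : LRL, Aeq (act (Equiv.swap a b) t) t ∧ FA t = {a, b} ∧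
      t = LRL.letr [(c, LRL.atom a), (d, LRL.atom b)] (LRL.app 1 []) := by
  refine ⟨_, ?_, ?_, rfl⟩
  · have h1 : act (Equiv.swap a b) (LRL.letr [(c, LRL.atom a), (d, LRL.atom b)] (LRL.app 1 []))
        = LRL.letr [(c, LRL.atom b), (d, LRL.atom a)] (LRL.app 1 []) := by
      simp [act, actEnv, actList, Equiv.swap_apply_left, Equiv.swap_apply_right,
        Equiv.swap_apply_of_ne_of_ne hac.symm hbc.symm,
        Equiv.swap_apply_of_ne_of_ne had.symm hbd.symm]
    rw [h1]
    refine Aeq.letr _ _ [(d, LRL.atom b), (c, LRL.atom a)] _ _ (List.Perm.swap _ _ _) ?_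
    have h2 : tupled [(c, LRL.atom b), (d, LRL.atom a)] (LRL.app 1 [])
        = LRL.lam c (LRL.lam d (LRL.app 0 [LRL.atom b, LRL.atom a, LRL.app 1 []])) := by
      simp [tupled]
    have h3 : tupled [(d, LRL.atom b), (c, LRL.atom a)] (LRL.app 1 [])
        = LRL.lam d (LRL.lam c (LRL.app 0 [LRL.atom b, LRL.atom a, LRL.app 1 []])) := by
      simp [tupled]
    rw [h2, h3]
    refine Aeq.lamDiff c d _ _ hcd ?_ ?_
    · simp [FA, FAList]
    · have h4 : act (Equiv.swap c d) (LRL.lam c (LRL.app 0 [LRL.atom b, LRL.atom a, LRL.app 1 []]))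
          = LRL.lam d (LRL.app 0 [LRL.atom b, LRL.atom a, LRL.app 1 []]) := by
        simp [act, actList, Equiv.swap_apply_left,
          Equiv.swap_apply_of_ne_of_ne hbc hbd, Equiv.swap_apply_of_ne_of_ne hac had]
      rw [h4]
      refine Aeq.lamSame _ _ _ (Aeq.app 0 _ _ rfl ?_)
      intro i h1 h2
      simp only [List.length] at h1
      interval_cases i
      · exact Aeq.atom _
      · exact Aeq.atom _
      · exact Aeq.app 1 [] [] rfl (by intro i h _; simp at h)
  · simp [FA, FAEnv, FAList]
    exact ⟨⟨hac.symm, hbc.symm⟩, had.symm, hbd.symm⟩
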